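/- Let h_A1, h_B1, h_1A, h_1B be real numbers, each at least 1. Set h_AB = min{h_A1, h_1B} and h_BA = min{h_B1, h_1A}, and assume h_BA ≤ h_AB. Then there exists a real number α with 0 ≤ α ≤ 1 such that: (i) log₂(1 + α·h_1B²/(1 + (1 − α)·h_1B²)) ≥ log₂(1 + h_BA²) − 1; (ii) log₂(1 + α·h_1A²/(1 + (1 − α)·h_1A²)) ≥ log₂(1 + h_BA²) − 1; and (iii) log₂(1 + (1 − α)·h_1B²) ≥ log₂(1 + h_AB²) − log₂(1 + h_BA²) − 1. -/

import Mathlib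

open Real

lemma aux1 {x y : ℝ} (hy : 0 < y) (h : y/2 ≤ x) : logb 2 y - 1 ≤ logb 2 x := by
  have h2 : logb 2 (y/2) = logb 2 y - 1 := by
    rw [Real.logb_div (by linarith) (by norm_num)]
    simp
  rw [← h2]
  exact Real.logb_le_logb_of_le (by norm_num) (by linarith) h

lemma aux2 {x y z : ℝ} (hy : 0 < y) (hz : 0 < z) (h : y/(2*z) ≤ x) :
    logb 2 y - logb 2 z - 1 ≤ logb 2 x := by
  have h2 : logb 2 (y/(2*z)) = logb 2 y - logb 2 z - 1 := by
    rw [Real.logb_div (by positivity) (by positivity),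
      Real.logb_mul (by norm_num) (by positivity)]
    simp; ring
  rw [← h2]
  exact Real.logb_le_logb_of_le (by norm_num) (by positivity) h

set_option maxHeartbeats 1000000 in
/-- Existence of a relay power allocation `α ∈ [0, 1]` satisfying all three
downlink decoding conditions within the claimed gaps, for the two-way Gaussian
relay channel of Theorem 2. -/
theorem exists_alpha_downlink (hA1 hB1 h1A h1B : ℝ)
    (hhA1 : 1 ≤ hA1) (hhB1 : 1 ≤ hB1) (hh1A : 1 ≤ h1A) (hh1B : 1 ≤ h1B)
    (hle : min hB1 h1A ≤ min hA1 h1B) :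
    ∃ α : ℝ, 0 ≤ α ∧ α ≤ 1 ∧
      logb 2 (1 + α * h1B ^ 2 / (1 + (1 - α) * h1B ^ 2)) ≥
        logb 2 (1 + (min hB1 h1A) ^ 2) - 1 ∧
      logb 2 (1 + α * h1A ^ 2 / (1 + (1 - α) * h1A ^ 2)) ≥
        logb 2 (1 + (min hB1 h1A) ^ 2) - 1 ∧
      logb 2 (1 + (1 - α) * h1B ^ 2) ≥
        logb 2 (1 + (min hA1 h1B) ^ 2) - logb 2 (1 + (min hB1 h1A) ^ 2) - 1 := by
  set b := min hB1 h1A with hbdef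
  set a := min hA1 h1B with hadef
  have hb1 : (1:ℝ) ≤ b := le_min hhB1 hh1A
  have ha1 : (1:ℝ) ≤ a := le_min hhA1 hh1B
  have hba : b ≤ a := hle
  have hbA : b ≤ h1A := min_le_right _ _
  have haB : a ≤ h1B := min_le_right _ _
  have hB0 : (0:ℝ) < h1B := by linarith
  have hA0 : (0:ℝ) < h1A := by linarith
  have hbpos : (0:ℝ) < 1 + b^2 := by positivity
  have hapos : (0:ℝ) < 1 + a^2 := by positivity
  have hbhB : b ≤ h1B := le_trans hba haB
  clear_value a b
  have h1Bsq : (1:ℝ) ≤ h1B^2 := by nlinarith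
  have haa : a^2 ≤ h1B^2 := by nlinarith
  have hbb : b^2 ≤ h1A^2 := by nlinarith
  by_cases hc : 1 + a^2 ≤ 2*(1+b^2)
  · refine ⟨1, by norm_num, le_refl 1, ?_, ?_, ?_⟩
    · apply aux1 hbpos
      have e : (1:ℝ) * h1B ^ 2 / (1 + (1-1) * h1B ^ 2) = h1B^2 := by norm_num
      rw [e]; nlinarith
    · apply aux1 hbpos
      have e : (1:ℝ) * h1A ^ 2 / (1 + (1-1) * h1A ^ 2) = h1A^2 := by norm_num
      rw [e]; nlinarith
    · apply aux2 hapos hbpos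
      have e : 1 + (1-(1:ℝ)) * h1B ^ 2 = 1 := by ring
      rw [e, div_le_one (by positivity)]; linarith
  · push_neg at hc
    set t := (1+a^2)/(2*(1+b^2)) - 1 with ht
    have heq : 2*(1+b^2)*(1+t) = 1+a^2 := by
      rw [ht]; field_simp; ring
    have ht0 : 0 < t := by
      rw [ht]; rw [sub_pos, lt_div_iff₀ (by positivity)]; linarith
    clear_value t
    have htle : t ≤ h1B^2 := by nlinarith [heq, haa]
    refine ⟨1 - t/h1B^2, ?_, ?_, ?_, ?_, ?_⟩
    · have : t/h1B^2 ≤ 1 := (div_le_one (by positivity)).mpr htle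
      linarith
    · have : 0 ≤ t/h1B^2 := by positivity
      linarith
    · apply aux1 hbpos
      have e1 : 1 + (1-(1 - t/h1B^2)) * h1B ^ 2 = 1 + t := by
        field_simp; ring
      have e2 : (1 - t/h1B^2) * h1B ^ 2 = h1B^2 - t := by
        field_simp
      rw [e1, e2]
      have key : ((1+b^2)/2 - 1) * (1+t) ≤ h1B^2 - t := by nlinarith [heq, haa]
      have h3 : (1+b^2)/2 - 1 ≤ (h1B^2 - t)/(1+t) :=
        (le_div_iff₀ (by linarith)).mpr key
      linarith
    · apply aux1 hbpos
      set s := t/h1B^2 with hs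
      have hs0 : 0 ≤ s := by positivity
      have hseq : s * h1B^2 = t := by rw [hs]; field_simp
      clear_value s
      have e1 : 1 + (1-(1 - s)) * h1A ^ 2 = 1 + s * h1A^2 := by ring
      rw [e1]
      have hD : (0:ℝ) < 1 + s * h1A^2 := by positivity
      have hPt : (1+b^2)*t = (1+a^2)/2 - (1+b^2) := by linear_combination heq/2
      have hPt2 : (1+b^2)*t*h1A^2 = ((1+a^2)/2 - (1+b^2))*h1A^2 := by
        linear_combination h1A^2 * hPt
      have hst : s*h1A^2*h1B^2 = t*h1A^2 := by linear_combination h1A^2*hseq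
      have hst2 : b^2*s*h1A^2*h1B^2 = b^2*t*h1A^2 := by
        linear_combination b^2*h1A^2*hseq
      have hw1 : (1+b^2)*h1B^2 ≤ (1+h1A^2)*h1B^2 :=
        mul_le_mul_of_nonneg_right (by linarith) (sq_nonneg h1B)
      have hw2 : (1+a^2)*h1A^2 ≤ 2*h1B^2*h1A^2 :=
        mul_le_mul_of_nonneg_right (by linarith) (sq_nonneg h1A)
      have hw3 : (0:ℝ) ≤ (1+b^2)*h1A^2 := by positivity
      have keyM : ((1+b^2)/2 - 1) * (1 + s*h1A^2) * (2*h1B^2) ≤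
          (1 - s) * h1A^2 * (2*h1B^2) := by
        linarith [hw1, hw2, hw3, hPt2, hst, hst2, hseq]
      have key : ((1+b^2)/2 - 1) * (1 + s*h1A^2) ≤ (1 - s) * h1A^2 :=
        le_of_mul_le_mul_right keyM (by positivity)
      have h3 : (1+b^2)/2 - 1 ≤ (1 - s) * h1A^2 / (1 + s*h1A^2) :=
        (le_div_iff₀ hD).mpr key
      linarith
    · apply aux2 hapos hbpos
      have e1 : 1 + (1-(1 - t/h1B^2)) * h1B ^ 2 = 1 + t := by field_simp; ring
      rw [e1, div_le_iff₀ (by positivity)]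
      linarith [heq]
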